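/- For every real number y ≠ 0, the limit lim_{N→∞} ( ∫₀^N dx/√(x² + y²) − Σ_{n=1}^N 1/n ) exists and equals log(2/|y|) − γ_E, where γ_E is the Euler–Mascheroni constant. (This evaluates the Fourier average ᾱ₁ on the axis μ₁ = μ₂ = 0 and pins down the additive constant in the leading order asymptote.) -/

import Mathlib

open Filter Real Topology

set_option maxHeartbeats 1000000

private lemma aux_integral (y : ℝ) (hy : y ≠ 0) (N : ℝ) :
    (∫ x in (0 : ℝ)..N, (Real.sqrt (x ^ 2 + y ^ 2))⁻¹) = Real.arsinh (N / |y|) := by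
  have hy' : (0:ℝ) < |y| := abs_pos.mpr hy
  have key : ∀ x : ℝ, HasDerivAt (fun t => Real.arsinh (t / |y|))
      ((Real.sqrt (x ^ 2 + y ^ 2))⁻¹) x := by
    intro x
    have h1 := (Real.hasDerivAt_arsinh (x / |y|)).comp x ((hasDerivAt_id x).div_const |y|)
    refine h1.congr_deriv ?_
    have hmul : Real.sqrt (1 + (x / |y|) ^ 2) * |y| = Real.sqrt (x ^ 2 + y ^ 2) := by
      rw [← Real.sqrt_sq_eq_abs, ← Real.sqrt_mul (by positivity)]
      congr 1
      field_simp [sq_abs]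
      rw [Real.sq_sqrt (sq_nonneg y)]
      ring
    rw [mul_one_div, div_eq_mul_inv, ← mul_inv, hmul]
  have hcont : Continuous fun x : ℝ => (Real.sqrt (x ^ 2 + y ^ 2))⁻¹ := by
    apply Continuous.inv₀
    · exact (continuous_pow 2).add continuous_const |>.sqrt
    · intro x
      have : 0 < x ^ 2 + y ^ 2 := by positivity
      positivity
  rw [intervalIntegral.integral_eq_sub_of_hasDerivAt (fun x _ => key x)
    (hcont.intervalIntegrable _ _)]
  simp

/-- for `y ≠ 0`,
`lim_{N→∞} (∫₀^N dx/√(x² + y²) − Σ_{n=1}^N 1/n) = log(2/|y|) − γ_E`. -/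
theorem statement8 (y : ℝ) (hy : y ≠ 0) :
    Filter.Tendsto (fun N : ℕ =>
      (∫ x in (0 : ℝ)..(N : ℝ), (Real.sqrt (x ^ 2 + y ^ 2))⁻¹)
        - ∑ n ∈ Finset.Icc 1 N, (1 : ℝ) / n)
      Filter.atTop (nhds (Real.log (2 / |y|) - Real.eulerMascheroniConstant)) := by
  have hy' : (0:ℝ) < |y| := abs_pos.mpr hy
  -- auxiliary convergence: √(N²+y²)/N → 1
  have hs : Tendsto (fun N : ℕ => Real.sqrt ((N : ℝ) ^ 2 + y ^ 2) / N) atTop (𝓝 1) := by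
    have h0 : Tendsto (fun N : ℕ => Real.sqrt (1 + (y / N) ^ 2)) atTop (𝓝 1) := by
      have : Tendsto (fun N : ℕ => 1 + (y / (N:ℝ)) ^ 2) atTop (𝓝 (1 + 0 ^ 2)) := by
        apply Tendsto.const_add
        exact (tendsto_const_nhds.div_atTop tendsto_natCast_atTop_atTop).pow 2
      have := this.sqrt
      simpa using this
    refine h0.congr' ?_
    filter_upwards [eventually_gt_atTop 0] with N hN
    have hN' : (0:ℝ) < N := by exact_mod_cast hN
    rw [eq_div_iff hN'.ne']
    have hsq : (Real.sqrt (1 + (y / N) ^ 2) * N) ^ 2 = ((N:ℝ) ^ 2 + y ^ 2) := by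
      rw [mul_pow, Real.sq_sqrt (by positivity)]
      field_simp
    rw [← hsq, Real.sqrt_sq (by positivity)]
  -- main decomposition
  have hgoal : Tendsto (fun N : ℕ =>
      Real.log ((1 + Real.sqrt ((N:ℝ) ^ 2 + y ^ 2) / N) / 2) + Real.log (2 / |y|)
        + ((harmonic N : ℝ) - Real.log N) * (-1)) atTop
      (𝓝 (Real.log (2 / |y|) - Real.eulerMascheroniConstant)) := by
    have h1 : Tendsto (fun N : ℕ => Real.log ((1 + Real.sqrt ((N:ℝ) ^ 2 + y ^ 2) / N) / 2))
        atTop (𝓝 0) := by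
      have : Tendsto (fun N : ℕ => (1 + Real.sqrt ((N:ℝ) ^ 2 + y ^ 2) / N) / 2) atTop (𝓝 1) := by
        have := (hs.const_add 1).div_const 2
        simpa using this
      have := this.log one_ne_zero
      simpa using this
    have h2 := (Real.tendsto_harmonic_sub_log.mul_const (-1)).const_add (Real.log (2 / |y|))
    have := h1.add h2
    simpa [sub_eq_add_neg, add_assoc] using this
  refine hgoal.congr' ?_
  filter_upwards [eventually_gt_atTop 0] with N hN
  have hN' : (0:ℝ) < N := by exact_mod_cast hN
  rw [aux_integral y hy]
  have hsum : ∑ n ∈ Finset.Icc 1 N, (1 : ℝ) / n = (harmonic N : ℝ) := by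
    rw [harmonic_eq_sum_Icc]
    push_cast
    simp [one_div]
  have hsqrt_pos : (0:ℝ) < Real.sqrt ((N:ℝ)^2 + y^2) := by
    apply Real.sqrt_pos.mpr; positivity
  have harsinh : Real.arsinh ((N:ℝ) / |y|)
      = Real.log ((1 + Real.sqrt ((N:ℝ) ^ 2 + y ^ 2) / N) / 2) + Real.log (2 / |y|)
        + Real.log N := by
    rw [Real.arsinh, ← Real.log_mul (by positivity) (by positivity),
      ← Real.log_mul (by positivity) hN'.ne']
    congr 1
    have hmul : Real.sqrt (1 + ((N:ℝ) / |y|) ^ 2) * |y| = Real.sqrt ((N:ℝ) ^ 2 + y ^ 2) := by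
      rw [← Real.sqrt_sq_eq_abs, ← Real.sqrt_mul (by positivity)]
      congr 1
      field_simp [sq_abs]
      rw [Real.sq_sqrt (sq_nonneg y)]
      ring
    have h2 : Real.sqrt (1 + ((N:ℝ) / |y|) ^ 2) = Real.sqrt ((N:ℝ) ^ 2 + y ^ 2) / |y| := by
      rw [eq_div_iff hy'.ne', hmul]
    rw [h2]
    field_simp
  rw [hsum, harsinh]
  ring
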